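/- Let A be a symmetric real n×n matrix (n ≥ 2) with a nonzero kernel vector, and let a > 0 be a real number such that trace(A²) = a · trace(A). Then 0 ≤ trace(A) ≤ (n − 1) · a. Moreover, if trace(A) = 0 then A = 0, and if trace(A) = (n−1)a then A restricted to the orthogonal complement of the kernel vector equals a times the identity (equivalently, A² = a·A and A has rank n−1 or 0 accordingly). -/
import Mathlib

theorem stmt_3 {n : ℕ} (hn : 2 ≤ n) (A : Matrix (Fin n) (Fin n) ℝ)
    (hA : A.IsSymm) (v : Fin n → ℝ) (hv : v ≠ 0) (hAv : A.mulVec v = 0)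
    (a : ℝ) (ha : 0 < a) (htr : (A * A).trace = a * A.trace) :
    0 ≤ A.trace ∧ A.trace ≤ ((n : ℝ) - 1) * a ∧
    (A.trace = 0 → A = 0) ∧
    (A.trace = ((n : ℝ) - 1) * a → A * A = a • A ∧ A.rank = n - 1) := by
  classical
  have hH : A.IsHermitian := by
    rw [Matrix.IsHermitian, Matrix.conjTranspose_eq_transpose_of_trivial]; exact hA
  set U : Matrix (Fin n) (Fin n) ℝ := (hH.eigenvectorUnitary : Matrix (Fin n) (Fin n) ℝ) with hU
  set L : Fin n → ℝ := hH.eigenvalues with hL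
  have hUU : star U * U = 1 := Matrix.mem_unitaryGroup_iff'.mp hH.eigenvectorUnitary.2
  have hUU' : U * star U = 1 := Matrix.mem_unitaryGroup_iff.mp hH.eigenvectorUnitary.2
  have hspec : A = U * Matrix.diagonal L * star U := by
    have := hH.spectral_theorem
    simpa using this
  -- trace of U * D * star U is trace of D
  have key : ∀ D : Matrix (Fin n) (Fin n) ℝ, (U * D * star U).trace = D.trace := by
    intro D
    rw [Matrix.trace_mul_cycle, hUU, Matrix.one_mul]
  have htrA : A.trace = ∑ i, L i := by
    rw [hspec, key, Matrix.trace_diagonal]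
  have hAA : A * A = U * Matrix.diagonal (fun i => L i * L i) * star U := by
    rw [hspec]
    rw [show U * Matrix.diagonal L * star U * (U * Matrix.diagonal L * star U)
        = U * (Matrix.diagonal L * (star U * U) * Matrix.diagonal L) * star U by
      simp only [Matrix.mul_assoc]]
    rw [hUU, Matrix.mul_one, Matrix.diagonal_mul_diagonal]
  have htrAA : (A * A).trace = ∑ i, L i * L i := by
    rw [hAA, key, Matrix.trace_diagonal]
  have hQ : ∑ i, L i * L i = a * ∑ i, L i := by
    rw [← htrA, ← htrAA, htr]
  -- a zero eigenvalue
  have hdet : A.det = 0 := Matrix.exists_mulVec_eq_zero_iff.mp ⟨v, hv, hAv⟩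
  have hprod : ∏ i, L i = 0 := by
    have := hH.det_eq_prod_eigenvalues
    simp only [RCLike.ofReal_real_eq_id, id] at this
    rw [hdet] at this
    exact this.symm
  obtain ⟨i₀, -, hi₀⟩ := Finset.prod_eq_zero_iff.mp hprod
  -- nonnegativity of trace
  have hQnn : (0:ℝ) ≤ ∑ i, L i * L i := Finset.sum_nonneg fun i _ => mul_self_nonneg _
  have hSnn : (0:ℝ) ≤ ∑ i, L i := nonneg_of_mul_nonneg_right (hQ ▸ hQnn) ha
  have hsum_erase : ∑ i ∈ Finset.univ.erase i₀, L i = ∑ i, L i :=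
    Finset.sum_erase _ hi₀
  have hsumsq_erase : ∑ i ∈ Finset.univ.erase i₀, L i ^ 2 = ∑ i, L i * L i := by
    simp only [sq]
    exact Finset.sum_erase _ (by rw [hi₀]; ring)
  have hcard : (Finset.univ.erase i₀).card = n - 1 := by
    rw [Finset.card_erase_of_mem (Finset.mem_univ i₀), Finset.card_univ, Fintype.card_fin]
  have hcardR : ((Finset.univ.erase i₀).card : ℝ) = (n : ℝ) - 1 := by
    rw [hcard]
    have : (1:ℕ) ≤ n := le_trans one_le_two hn
    push_cast [Nat.cast_sub this]
    ring
  have hCS : (∑ i, L i) ^ 2 ≤ ((n:ℝ) - 1) * (a * ∑ i, L i) := by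
    calc (∑ i, L i) ^ 2 = (∑ i ∈ Finset.univ.erase i₀, L i) ^ 2 := by rw [hsum_erase]
      _ ≤ ((Finset.univ.erase i₀).card : ℝ) * ∑ i ∈ Finset.univ.erase i₀, L i ^ 2 :=
        sq_sum_le_card_mul_sum_sq
      _ = ((n:ℝ) - 1) * (a * ∑ i, L i) := by rw [hcardR, hsumsq_erase, hQ]
  have hn1pos : (0:ℝ) < (n:ℝ) - 1 := by
    have : (2:ℝ) ≤ (n:ℝ) := by exact_mod_cast hn
    linarith
  have hub : A.trace ≤ ((n : ℝ) - 1) * a := by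
    rw [htrA]
    rcases eq_or_lt_of_le hSnn with h | h
    · rw [← h]; positivity
    · have := hCS
      nlinarith
  refine ⟨htrA ▸ hSnn, hub, ?_, ?_⟩
  · -- trace = 0 → A = 0
    intro h0
    have hQ0 : ∑ i, L i * L i = 0 := by rw [hQ, ← htrA, h0, mul_zero]
    have hL0 : ∀ i, L i = 0 := by
      intro i
      have := (Finset.sum_eq_zero_iff_of_nonneg
        (fun i _ => mul_self_nonneg (L i))).mp hQ0 i (Finset.mem_univ i)
      exact mul_self_eq_zero.mp this
    have : Matrix.diagonal L = 0 := by
      ext i j; by_cases h : i = j <;> simp [Matrix.diagonal, h, hL0]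
    rw [hspec, this, Matrix.mul_zero, Matrix.zero_mul]
  · -- trace = (n-1)a
    intro heq
    have hS : ∑ i, L i = ((n:ℝ) - 1) * a := htrA ▸ heq
    have hzero : ∑ i ∈ Finset.univ.erase i₀, (L i - a) ^ 2 = 0 := by
      have h1 : ∑ i ∈ Finset.univ.erase i₀, (L i - a) ^ 2
          = ∑ i ∈ Finset.univ.erase i₀, (L i ^ 2 - 2 * a * L i + a ^ 2) :=
        Finset.sum_congr rfl (fun i _ => by ring)
      rw [h1, Finset.sum_add_distrib, Finset.sum_sub_distrib, ← Finset.mul_sum,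
        Finset.sum_const, nsmul_eq_mul, hsumsq_erase, hsum_erase, hQ, hS, hcardR]
      ring
    have hLa : ∀ i ∈ Finset.univ.erase i₀, L i = a := by
      intro i hi
      have := (Finset.sum_eq_zero_iff_of_nonneg
        (fun i _ => sq_nonneg (L i - a))).mp hzero i hi
      have := pow_eq_zero_iff (n := 2) (by norm_num) |>.mp this
      linarith
    have hsq : ∀ i, L i * L i = a * L i := by
      intro i
      by_cases h : i = i₀
      · rw [h, hi₀]; ring
      · rw [hLa i (Finset.mem_erase.mpr ⟨h, Finset.mem_univ i⟩)]
    constructor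
    · rw [hAA, hspec]
      have : Matrix.diagonal (fun i => L i * L i) = a • Matrix.diagonal L := by
        ext i j
        by_cases h : i = j
        · subst h; simp [hsq i]
        · simp [Matrix.diagonal_apply_ne _ h]
      rw [this]
      rw [Matrix.mul_smul, Matrix.smul_mul]
    · rw [hH.rank_eq_card_non_zero_eigs]
      have hiff : ∀ i, hH.eigenvalues i ≠ 0 ↔ i ≠ i₀ := by
        intro i
        constructor
        · intro h hcon; exact h (hcon ▸ hi₀)
        · intro h
          rw [show hH.eigenvalues i = L i from rfl,
            hLa i (Finset.mem_erase.mpr ⟨h, Finset.mem_univ i⟩)]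
          exact ne_of_gt ha
      calc Fintype.card {i // hH.eigenvalues i ≠ 0}
          = Fintype.card {i // i ≠ i₀} := Fintype.card_congr (Equiv.subtypeEquivRight hiff)
        _ = n - 1 := by
            rw [Fintype.card_subtype_compl (fun i => i = i₀)]
            simp
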